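/- arXiv:2005.14121 — 7 statements merged into one kernel-verified Lean document; each statement's English description precedes it below -/
import Mathlib

section
/- Let G be the join G = G1 ∇ G2 of two graphs G1 and G2 on disjoint vertex sets. Then the metamour graph of G equals the complement of G, and this complement has at least two connected components. -/
namespace SimpleGraph

variable {V : Type*}

/-- The metamour graph of `G`: same vertices, adjacency = distance exactly 2 in `G`. -/
def metamour (G : SimpleGraph V) : SimpleGraph V where
  Adj u v := G.dist u v = 2
  symm := by
    constructor
    intro u v h
    rwa [dist_comm]
  loopless := by
    constructor
    intro v h
    simp [dist_self] at h

/-- The metamour-degree of a vertex: the number of its metamours. -/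
noncomputable def metamourDegree (G : SimpleGraph V) (v : V) : ℕ :=
  {u | G.metamour.Adj v u}.ncard

end SimpleGraph

/-- The join of two graphs on disjoint vertex sets: all edges within each part as
given, plus all edges between the two parts. -/
def graphJoin {A B : Type*} (G1 : SimpleGraph A) (G2 : SimpleGraph B) :
    SimpleGraph (A ⊕ B) where
  Adj x y :=
    match x, y with
    | Sum.inl a, Sum.inl b => G1.Adj a b
    | Sum.inr a, Sum.inr b => G2.Adj a b
    | _, _ => True
  symm := by
    constructor
    rintro (a | a) (b | b) h
    · exact h.symm
    · trivial
    · trivial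
    · exact h.symm
  loopless := by
    constructor
    rintro (a | a) h
    · exact G1.loopless.irrefl a h
    · exact G2.loopless.irrefl a h

/-- For the join G of two (nonempty) graphs, the metamour graph of G
equals the complement of G, and this complement has at least two connected
components. -/
theorem metamour_of_join {A B : Type*} [Nonempty A] [Nonempty B]
    (G1 : SimpleGraph A) (G2 : SimpleGraph B) :
    (graphJoin G1 G2).metamour = (graphJoin G1 G2)ᶜ ∧
      ∃ c d : ((graphJoin G1 G2)ᶜ).ConnectedComponent, c ≠ d := by
  constructor
  · ext u v
    constructor
    · intro h
      have h2 : (graphJoin G1 G2).dist u v = 2 := h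
      constructor
      · intro he; subst he; simp [SimpleGraph.dist_self] at h2
      · intro ha
        rw [← SimpleGraph.dist_eq_one_iff_adj] at ha
        omega
    · rintro ⟨hne, hna⟩
      obtain ⟨w, hw1, hw2⟩ : ∃ w, (graphJoin G1 G2).Adj u w ∧ (graphJoin G1 G2).Adj w v := by
        match u, v with
        | Sum.inl a, Sum.inl a' => exact ⟨Sum.inr (Classical.arbitrary B), trivial, trivial⟩
        | Sum.inr b, Sum.inr b' => exact ⟨Sum.inl (Classical.arbitrary A), trivial, trivial⟩
        | Sum.inl a, Sum.inr b => exact absurd trivial hna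
        | Sum.inr b, Sum.inl a => exact absurd trivial hna
      have hle : (graphJoin G1 G2).dist u v ≤ 2 := by
        have := SimpleGraph.dist_le (hw1.toWalk.append hw2.toWalk)
        simpa using this
      have hpos : 0 < (graphJoin G1 G2).dist u v :=
        SimpleGraph.Reachable.pos_dist_of_ne ⟨hw1.toWalk.append hw2.toWalk⟩ hne
      have hne1 : (graphJoin G1 G2).dist u v ≠ 1 := by
        rw [Ne, SimpleGraph.dist_eq_one_iff_adj]; exact hna
      show (graphJoin G1 G2).dist u v = 2
      omega
  · have key : ∀ {x y : A ⊕ B}, ((graphJoin G1 G2)ᶜ).Reachable x y → x.isLeft = y.isLeft := by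
      intro x y hr
      obtain ⟨p⟩ := hr
      induction p with
      | nil => rfl
      | @cons a b c h p ih =>
        have hab : a.isLeft = b.isLeft := by
          obtain ⟨hne, hna⟩ := h
          match a, b with
          | Sum.inl _, Sum.inl _ => rfl
          | Sum.inr _, Sum.inr _ => rfl
          | Sum.inl _, Sum.inr _ => exact absurd trivial hna
          | Sum.inr _, Sum.inl _ => exact absurd trivial hna
        exact hab.trans ih
    refine ⟨((graphJoin G1 G2)ᶜ).connectedComponentMk (Sum.inl (Classical.arbitrary A)),
      ((graphJoin G1 G2)ᶜ).connectedComponentMk (Sum.inr (Classical.arbitrary B)), ?_⟩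
    intro hcd
    have := key (SimpleGraph.ConnectedComponent.eq.mp hcd)
    simp at this
end

section
/- Let M be a graph with at least two connected components M1, ..., Mt, and let G be the join of the complements of the connected components, G = complement(M1) ∇ ... ∇ complement(Mt). Then the metamour graph of G is M. In particular, if M is k-regular, then G is k-metamour-regular. -/
/-- Let M be a graph with at least two connected components. The join
of the complements of the connected components of M (which, as a graph on the
vertex set of M, is exactly the complement of M) has metamour graph M; in
particular, if M is k-regular then this join is k-metamour-regular. -/
theorem metamour_of_join_of_component_complements {V : Type*} (M : SimpleGraph V)
    (hM : ∃ c d : M.ConnectedComponent, c ≠ d) (k : ℕ) :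
    (Mᶜ).metamour = M ∧
      ((∀ v : V, {u | M.Adj v u}.ncard = k) → ∀ v : V, (Mᶜ).metamourDegree v = k) := by
  have key : ∀ u v : V, (Mᶜ).dist u v = 2 ↔ M.Adj u v := by
    intro u v
    constructor
    · intro h
      have hne : u ≠ v := by
        rintro rfl; simp [SimpleGraph.dist_self] at h
      by_contra hadj
      have : (Mᶜ).Adj u v := ⟨hne, hadj⟩
      rw [SimpleGraph.dist_eq_one_iff_adj.2 this] at h
      omega
    · intro hadj
      have hne : u ≠ v := hadj.ne
      -- find w in a different component from u
      obtain ⟨c, d, hcd⟩ := hM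
      have : ∃ e : M.ConnectedComponent, e ≠ M.connectedComponentMk u := by
        by_cases hc : c = M.connectedComponentMk u
        · exact ⟨d, by rw [← hc]; exact (Ne.symm hcd)⟩
        · exact ⟨c, hc⟩
      obtain ⟨e, he⟩ := this
      obtain ⟨w, rfl⟩ := e.exists_rep
      have huw : ¬ M.Reachable u w := by
        intro hr
        exact he (SimpleGraph.ConnectedComponent.sound hr.symm)
      have hvw : ¬ M.Reachable v w := fun hr => huw (hadj.reachable.trans hr)
      have h1 : (Mᶜ).Adj u w := ⟨fun h => huw (h ▸ SimpleGraph.Reachable.refl u),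
        fun h => huw h.reachable⟩
      have h2 : (Mᶜ).Adj w v := ⟨fun h => hvw (by simp [h]),
        fun h => hvw h.symm.reachable⟩
      have hwalk : ((h1.toWalk.append h2.toWalk) : (Mᶜ).Walk u v).length = 2 := by
        simp
      have hle : (Mᶜ).dist u v ≤ 2 := by
        have := SimpleGraph.dist_le (h1.toWalk.append h2.toWalk)
        rwa [hwalk] at this
      have hne0 : (Mᶜ).dist u v ≠ 0 := by
        rw [SimpleGraph.dist_ne_zero_iff_ne_and_reachable]
        exact ⟨hne, ⟨h1.toWalk.append h2.toWalk⟩⟩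
      have hne1 : (Mᶜ).dist u v ≠ 1 := by
        rw [Ne, SimpleGraph.dist_eq_one_iff_adj]
        intro h
        exact h.2 hadj
      omega
  have hmeta : (Mᶜ).metamour = M := by
    ext u v
    exact key u v
  refine ⟨hmeta, fun hreg v => ?_⟩
  unfold SimpleGraph.metamourDegree
  rw [hmeta]
  exact hreg v
end

section
/- Let G be a connected graph with n vertices. Then G is 1-metamour-regular if and only if n ≥ 4 is even and either G = P4, or G = K_n − μ for some perfect matching μ of K_n. -/
namespace SimpleGraph

variable {W : Type*} {G : SimpleGraph V} {H : SimpleGraph W} {u v w : V} {n : ℕ}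

private lemma dist_eq_two_of' (h1 : G.Adj u w) (h2 : G.Adj w v) (h3 : ¬ G.Adj u v)
    (h4 : u ≠ v) : G.dist u v = 2 := by
  have hle : G.dist u v ≤ 2 := by
    have := G.dist_le (Walk.cons h1 (Walk.cons h2 Walk.nil))
    simpa using this
  have h0 : G.dist u v ≠ 0 := by
    rw [dist_ne_zero_iff_ne_and_reachable]
    exact ⟨h4, ⟨Walk.cons h1 (Walk.cons h2 Walk.nil)⟩⟩
  have h1' : G.dist u v ≠ 1 := fun h => h3 (dist_eq_one_iff_adj.mp h)
  omega

private lemma exists_mid_of_dist_two' (h : G.dist u v = 2) :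
    ∃ w, G.Adj u w ∧ G.Adj w v := by
  have hr : G.Reachable u v := Reachable.of_dist_ne_zero (by omega)
  obtain ⟨p, hp⟩ := hr.exists_walk_length_eq_dist
  rw [h] at hp
  cases p with
  | nil => simp at hp
  | cons h1 q =>
    cases q with
    | nil => simp at hp
    | cons h2 r =>
      cases r with
      | nil => exact ⟨_, h1, h2⟩
      | cons h3 s => simp [Nat.add_eq_zero] at hp

private lemma exists_adj_of_dist' (hG : G.Connected) (h : G.dist u v = n + 1) :
    ∃ w, G.Adj w v ∧ G.dist u w = n := by
  have hr : G.Reachable u v := Reachable.of_dist_ne_zero (by omega)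
  obtain ⟨p, hp⟩ := hr.exists_walk_length_eq_dist
  rw [h] at hp
  cases hq : p.reverse with
  | nil =>
    have : p.reverse.length = 0 := by rw [hq]; rfl
    rw [Walk.length_reverse] at this; omega
  | cons hadj q =>
    rename_i x
    refine ⟨x, hadj.symm, ?_⟩
    have hql : q.length = n := by
      have : p.reverse.length = n + 1 := by rw [Walk.length_reverse, hp]
      rw [hq] at this; simpa using this
    have hle : G.dist u x ≤ n := by
      have := G.dist_le q.reverse
      rw [Walk.length_reverse] at this; omega
    have hge : n ≤ G.dist u x := by
      have htri := hG.dist_triangle (u := u) (v := x) (w := v)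
      have : G.dist x v ≤ 1 := by
        have := G.dist_le (Walk.cons hadj.symm Walk.nil)
        simpa using this
      omega
    omega

private lemma exists_dist_eq' (hG : G.Connected) :
    ∀ m, ∀ v : V, G.dist u v = m → ∀ n ≤ m, ∃ w, G.dist u w = n := by
  intro m
  induction m with
  | zero =>
    intro v _ n hn
    exact ⟨u, by simpa [Nat.le_zero.mp hn] using G.dist_self u⟩
  | succ m IH =>
    intro v hv n hn
    rcases Nat.lt_or_ge n (m + 1) with h | h
    · obtain ⟨w, _, hw⟩ := exists_adj_of_dist' hG hv
      exact IH w hw n (by omega)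
    · exact ⟨v, by omega⟩

private lemma iso_dist_le' (φ : G ≃g H) (u v : V) :
    H.dist (φ u) (φ v) ≤ G.dist u v := by
  by_cases h : G.Reachable u v
  · obtain ⟨p, hp⟩ := h.exists_walk_length_eq_dist
    calc H.dist (φ u) (φ v) ≤ (p.map φ.toHom).length := H.dist_le _
    _ = G.dist u v := by rw [Walk.length_map, hp]
  · rw [dist_eq_zero_of_not_reachable h, dist_eq_zero_of_not_reachable]
    intro hr
    obtain ⟨p⟩ := hr
    have : G.Reachable u v := by
      have := Walk.map (Iso.toHom φ.symm) p
      rw [show (Iso.toHom φ.symm) (φ u) = u from φ.symm_apply_apply u,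
        show (Iso.toHom φ.symm) (φ v) = v from φ.symm_apply_apply v] at this
      exact ⟨this⟩
    exact h this

private lemma iso_dist' (φ : G ≃g H) (u v : V) :
    H.dist (φ u) (φ v) = G.dist u v := by
  refine le_antisymm (iso_dist_le' φ u v) ?_
  have := iso_dist_le' φ.symm (φ u) (φ v)
  simpa using this

private lemma p4_dist_two_iff' (a b : Fin 4) :
    (pathGraph 4).dist a b = 2 ↔ b = ![2, 3, 0, 1] a := by
  have adj01 : (pathGraph 4).Adj 0 1 := by rw [pathGraph_adj]; decide
  have adj12 : (pathGraph 4).Adj 1 2 := by rw [pathGraph_adj]; decide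
  have adj23 : (pathGraph 4).Adj 2 3 := by rw [pathGraph_adj]; decide
  have nadj02 : ¬ (pathGraph 4).Adj 0 2 := by rw [pathGraph_adj]; decide
  have nadj13 : ¬ (pathGraph 4).Adj 1 3 := by rw [pathGraph_adj]; decide
  have d01 : (pathGraph 4).dist 0 1 = 1 := dist_eq_one_iff_adj.mpr adj01
  have d12 : (pathGraph 4).dist 1 2 = 1 := dist_eq_one_iff_adj.mpr adj12
  have d23 : (pathGraph 4).dist 2 3 = 1 := dist_eq_one_iff_adj.mpr adj23
  have d02 : (pathGraph 4).dist 0 2 = 2 := dist_eq_two_of' adj01 adj12 nadj02 (by decide)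
  have d13 : (pathGraph 4).dist 1 3 = 2 := dist_eq_two_of' adj12 adj23 nadj13 (by decide)
  have d03 : (pathGraph 4).dist 0 3 ≠ 2 := by
    intro h
    obtain ⟨w, h1, h2⟩ := exists_mid_of_dist_two' h
    fin_cases w <;> revert h1 h2 <;> rw [pathGraph_adj, pathGraph_adj] <;> decide
  have d10 : (pathGraph 4).dist 1 0 = 1 := by rw [dist_comm]; exact d01
  have d21 : (pathGraph 4).dist 2 1 = 1 := by rw [dist_comm]; exact d12
  have d32 : (pathGraph 4).dist 3 2 = 1 := by rw [dist_comm]; exact d23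
  have d20 : (pathGraph 4).dist 2 0 = 2 := by rw [dist_comm]; exact d02
  have d31 : (pathGraph 4).dist 3 1 = 2 := by rw [dist_comm]; exact d13
  have d30 : (pathGraph 4).dist 3 0 ≠ 2 := by rw [dist_comm]; exact d03
  fin_cases a <;> fin_cases b
  · exact iff_of_false (by simp [dist_self]) (by decide)
  · exact iff_of_false (by simp [d01]) (by decide)
  · exact iff_of_true d02 (by decide)
  · exact iff_of_false d03 (by decide)
  · exact iff_of_false (by simp [d10]) (by decide)
  · exact iff_of_false (by simp [dist_self]) (by decide)
  · exact iff_of_false (by simp [d12]) (by decide)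
  · exact iff_of_true d13 (by decide)
  · exact iff_of_true d20 (by decide)
  · exact iff_of_false (by simp [d21]) (by decide)
  · exact iff_of_false (by simp [dist_self]) (by decide)
  · exact iff_of_false (by simp [d23]) (by decide)
  · exact iff_of_false d30 (by decide)
  · exact iff_of_true d31 (by decide)
  · exact iff_of_false (by simp [d32]) (by decide)
  · exact iff_of_false (by simp [dist_self]) (by decide)

end SimpleGraph

open SimpleGraph

/-- A connected graph G on n vertices is 1-metamour-regular iff n ≥ 4
is even and G is the path P4 or G = K_n − μ for a perfect matching μ of K_n. -/
theorem one_metamour_regular_iff {V : Type*} [Fintype V] (G : SimpleGraph V)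
    (hG : G.Connected) :
    (∀ v : V, G.metamourDegree v = 1) ↔
      (4 ≤ Fintype.card V ∧ Even (Fintype.card V) ∧
        (Nonempty (G ≃g SimpleGraph.pathGraph 4) ∨
          ∃ M : SimpleGraph V, (∀ v : V, ∃! u : V, M.Adj v u) ∧
            G = (⊤ : SimpleGraph V) \ M)) := by
  classical
  constructor
  · intro h1
    -- extract the metamour function f
    have h2 : ∀ v : V, ∃ a, {u | G.dist v u = 2} = {a} := fun v =>
      Set.ncard_eq_one.mp (h1 v)
    choose f hf using h2
    have hfd : ∀ v, G.dist v (f v) = 2 := fun v => by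
      have : f v ∈ {u | G.dist v u = 2} := (hf v).symm ▸ Set.mem_singleton _
      exact this
    have hfu : ∀ v u, G.dist v u = 2 → u = f v := fun v u h => by
      have : u ∈ ({f v} : Set V) := (hf v) ▸ h
      exact this
    have hadj1 : ∀ x y : V, G.Adj x y → G.dist x y = 1 := fun _ _ h =>
      dist_eq_one_iff_adj.mpr h
    have htri : ∀ x y z : V, G.dist x z ≤ G.dist x y + G.dist y z := fun x y z =>
      hG.dist_triangle
    -- perfect matching on the metamour graph gives evenness
    have hpm : (⊤ : G.metamour.Subgraph).IsPerfectMatching := by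
      rw [Subgraph.isPerfectMatching_iff]
      intro v
      refine ⟨f v, ?_, fun u hu => ?_⟩
      · exact (Subgraph.top_adj).mpr (hfd v)
      · exact hfu v u ((Subgraph.top_adj).mp hu)
    have heven : Even (Fintype.card V) := hpm.even_card
    -- card ≥ 4
    obtain ⟨v0'⟩ := hG.nonempty
    obtain ⟨w', hw1, hw2⟩ := exists_mid_of_dist_two' (hfd v0')
    have hcard3 : 3 ≤ Fintype.card V := by
      have hne1 : v0' ≠ w' := G.ne_of_adj hw1
      have hne2 : w' ≠ f v0' := G.ne_of_adj hw2
      have hne3 : v0' ≠ f v0' := by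
        intro h
        have := hfd v0'
        rw [← h, G.dist_self] at this
        omega
      have hsub : ({v0', w', f v0'} : Finset V) ⊆ Finset.univ := Finset.subset_univ _
      have hc : ({v0', w', f v0'} : Finset V).card = 3 :=
        Finset.card_eq_three.mpr ⟨v0', w', f v0', hne1, hne3, hne2, rfl⟩
      calc 3 = ({v0', w', f v0'} : Finset V).card := hc.symm
      _ ≤ Finset.univ.card := Finset.card_le_card hsub
      _ = Fintype.card V := rfl
    have hcard4 : 4 ≤ Fintype.card V := by
      obtain ⟨k, hk⟩ := heven
      omega
    refine ⟨hcard4, heven, ?_⟩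
    by_cases hdle : ∀ a b : V, G.dist a b ≤ 2
    · -- complete graph minus perfect matching
      right
      refine ⟨G.metamour, fun v => ⟨f v, hfd v, fun u hu => hfu v u hu⟩, ?_⟩
      ext a b
      rw [sdiff_adj, top_adj]
      show G.Adj a b ↔ a ≠ b ∧ ¬ G.dist a b = 2
      constructor
      · intro h
        exact ⟨G.ne_of_adj h, by rw [hadj1 a b h]; omega⟩
      · rintro ⟨hne, hd2⟩
        have hle := hdle a b
        have hne0 : G.dist a b ≠ 0 := by
          rw [dist_ne_zero_iff_ne_and_reachable]
          exact ⟨hne, hG.preconnected a b⟩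
        have : G.dist a b = 1 := by omega
        exact dist_eq_one_iff_adj.mp this
    · -- P4 case
      left
      push_neg at hdle
      obtain ⟨v0, b, hab⟩ := hdle
      obtain ⟨v3, hv3⟩ := exists_dist_eq' hG (G.dist v0 b) b rfl 3 (by omega)
      obtain ⟨v2, h23, h02⟩ := exists_adj_of_dist' hG (show G.dist v0 v3 = 2 + 1 from hv3)
      obtain ⟨v1, h12, h01d⟩ := exists_adj_of_dist' hG (show G.dist v0 v2 = 1 + 1 from h02)
      have h01 : G.Adj v0 v1 := dist_eq_one_iff_adj.mp h01d
      have hfv0 : f v0 = v2 := (hfu v0 v2 h02).symm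
      have hfv2 : f v2 = v0 := (hfu v2 v0 (by rwa [dist_comm])).symm
      have hn13 : ¬ G.Adj v1 v3 := by
        intro h
        have := htri v0 v1 v3
        rw [h01d, hadj1 _ _ h] at this
        omega
      have hne13 : v1 ≠ v3 := by
        intro h
        rw [h] at h01d
        omega
      have h13 : G.dist v1 v3 = 2 := dist_eq_two_of' h12 h23 hn13 hne13
      have hfv1 : f v1 = v3 := (hfu v1 v3 h13).symm
      have hfv3 : f v3 = v1 := (hfu v3 v1 (by rwa [dist_comm])).symm
      -- every neighbor of v0 is v1
      have hA : ∀ u, G.Adj v0 u → u = v1 := by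
        intro u hu
        by_contra hne1
        have hd0u : G.dist v0 u = 1 := hadj1 _ _ hu
        have hu3 : u ≠ v3 := by
          intro h; rw [h] at hd0u; omega
        have hnadj3u : ¬ G.Adj v3 u := by
          intro h
          have := htri v0 u v3
          rw [hd0u, hadj1 _ _ h.symm] at this
          omega
        have hd3u2 : G.dist v3 u ≠ 2 := by
          intro h
          have := hfu v3 u h
          rw [hfv3] at this
          exact hne1 this
        have hd3u0 : G.dist v3 u ≠ 0 := by
          rw [dist_ne_zero_iff_ne_and_reachable]
          exact ⟨fun h => hu3 h.symm, hG.preconnected v3 u⟩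
        have hd3u1 : G.dist v3 u ≠ 1 := fun h => hnadj3u (dist_eq_one_iff_adj.mp h)
        have hnadj2u : ¬ G.Adj v2 u := by
          intro h
          have : G.dist v3 u ≤ 2 := by
            have := G.dist_le (Walk.cons h23.symm (Walk.cons h Walk.nil))
            simpa using this
          omega
        have hne2u : v2 ≠ u := by
          intro h; rw [← h] at hd0u; omega
        have hd2u2 : G.dist v2 u ≠ 2 := by
          intro h
          have := hfu v2 u h
          rw [hfv2] at this
          exact (G.ne_of_adj hu) this.symm
        have hd2u0 : G.dist v2 u ≠ 0 := by
          rw [dist_ne_zero_iff_ne_and_reachable]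
          exact ⟨hne2u, hG.preconnected v2 u⟩
        have hd2u1 : G.dist v2 u ≠ 1 := fun h => hnadj2u (dist_eq_one_iff_adj.mp h)
        have hd1u : G.dist v1 u ≤ 2 := by
          have := G.dist_le (Walk.cons h01.symm (Walk.cons hu Walk.nil))
          simpa using this
        have hd1u1 : G.dist v1 u ≠ 1 := by
          intro h
          have hadj : G.Adj v1 u := dist_eq_one_iff_adj.mp h
          have : G.dist v2 u ≤ 2 := by
            have := G.dist_le (Walk.cons h12.symm (Walk.cons hadj Walk.nil))
            simpa using this
          omega
        have hd1u0 : G.dist v1 u ≠ 0 := by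
          rw [dist_ne_zero_iff_ne_and_reachable]
          exact ⟨fun h => hne1 h.symm, hG.preconnected v1 u⟩
        have : G.dist v1 u = 2 := by omega
        have := hfu v1 u this
        rw [hfv1] at this
        exact hu3 this
      -- every vertex at distance 3 from v0 is v3
      have hB : ∀ u, G.dist v0 u = 3 → u = v3 := by
        intro u hu
        obtain ⟨w, hwu, hw⟩ := exists_adj_of_dist' hG (show G.dist v0 u = 2 + 1 from hu)
        have hwv2 : w = v2 := by
          have := hfu v0 w hw
          rwa [hfv0] at this
        have h2u : G.Adj v2 u := hwv2 ▸ hwu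
        have hd1u : G.dist v1 u ≤ 2 := by
          have := G.dist_le (Walk.cons h12 (Walk.cons h2u Walk.nil))
          simpa using this
        have hd1u1 : G.dist v1 u ≠ 1 := by
          intro h
          have := htri v0 v1 u
          rw [h01d, h] at this
          omega
        have hd1u0 : G.dist v1 u ≠ 0 := by
          rw [dist_ne_zero_iff_ne_and_reachable]
          refine ⟨fun h => ?_, hG.preconnected v1 u⟩
          rw [← h] at hu
          omega
        have : G.dist v1 u = 2 := by omega
        have := hfu v1 u this
        rwa [hfv1] at this
      -- every vertex is at distance ≤ 3 from v0
      have hC : ∀ m, ∀ u, G.dist v0 u = m → m ≤ 3 := by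
        intro m
        induction m using Nat.strong_induction_on with
        | _ m IH =>
          intro u hu
          by_contra hlt
          push_neg at hlt
          obtain ⟨w, hwu, hw⟩ := exists_adj_of_dist' hG
            (show G.dist v0 u = (m - 1) + 1 by omega)
          have hw3 : m - 1 ≤ 3 := IH (m - 1) (by omega) w hw
          have hm4 : m = 4 := by omega
          have hwv3 : w = v3 := hB w (by omega)
          have h3u : G.Adj v3 u := hwv3 ▸ hwu
          have hd2u : G.dist v2 u ≤ 2 := by
            have := G.dist_le (Walk.cons h23 (Walk.cons h3u Walk.nil))
            simpa using this
          have hd2u1 : G.dist v2 u ≠ 1 := by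
            intro h
            have := htri v0 v2 u
            rw [h02, h] at this
            omega
          have hd2u0 : G.dist v2 u ≠ 0 := by
            rw [dist_ne_zero_iff_ne_and_reachable]
            refine ⟨fun h => ?_, hG.preconnected v2 u⟩
            rw [← h] at hu
            omega
          have : G.dist v2 u = 2 := by omega
          have := hfu v2 u this
          rw [hfv2] at this
          rw [this, G.dist_self] at hu
          omega
      -- classification of vertices
      have hclass : ∀ u : V, u = v0 ∨ u = v1 ∨ u = v2 ∨ u = v3 := by
        intro u
        have hle := hC (G.dist v0 u) u rfl
        have : G.dist v0 u = 0 ∨ G.dist v0 u = 1 ∨ G.dist v0 u = 2 ∨ G.dist v0 u = 3 := by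
          omega
        rcases this with h | h | h | h
        · left
          exact ((hG.dist_eq_zero_iff).mp h).symm
        · right; left
          exact hA u (dist_eq_one_iff_adj.mp h)
        · right; right; left
          have := hfu v0 u h
          rwa [hfv0] at this
        · right; right; right
          exact hB u h
      -- distances from v0
      have dd0 : G.dist v0 v0 = 0 := dist_self
      have dd1 : G.dist v0 v1 = 1 := h01d
      have dd2 : G.dist v0 v2 = 2 := h02
      have dd3 : G.dist v0 v3 = 3 := hv3
      -- the equivalence
      have hub : ∀ u : V, G.dist v0 u ≤ 3 := fun u => hC (G.dist v0 u) u rfl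
      let ff : V → Fin 4 := fun u => ⟨G.dist v0 u, by have := hub u; omega⟩
      let gg : Fin 4 → V := ![v0, v1, v2, v3]
      have ffv0 : ff v0 = 0 := by apply Fin.ext; simpa [ff] using dd0
      have ffv1 : ff v1 = 1 := by apply Fin.ext; simpa [ff] using dd1
      have ffv2 : ff v2 = 2 := by apply Fin.ext; simpa [ff] using dd2
      have ffv3 : ff v3 = 3 := by apply Fin.ext; simpa [ff] using dd3
      have hleft : Function.LeftInverse gg ff := by
        intro u
        rcases hclass u with rfl | rfl | rfl | rfl
        · rw [ffv0]; rfl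
        · rw [ffv1]; rfl
        · rw [ffv2]; rfl
        · rw [ffv3]; rfl
      have hright : Function.RightInverse gg ff := by
        intro i
        fin_cases i
        · exact ffv0
        · exact ffv1
        · exact ffv2
        · exact ffv3
      -- adjacency facts
      have hn02 : ¬ G.Adj v0 v2 := by
        intro h; rw [hadj1 _ _ h] at dd2; omega
      have hn03 : ¬ G.Adj v0 v3 := by
        intro h; rw [hadj1 _ _ h] at dd3; omega
      have hn13' : ¬ G.Adj v1 v3 := hn13
      refine ⟨⟨⟨ff, gg, hleft, hright⟩, ?_⟩⟩
      intro x y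
      show (pathGraph 4).Adj (ff x) (ff y) ↔ G.Adj x y
      rcases hclass x with rfl | rfl | rfl | rfl <;> rcases hclass y with rfl | rfl | rfl | rfl
      · rw [ffv0]; exact iff_of_false (by rw [pathGraph_adj]; decide) (G.loopless.irrefl _)
      · rw [ffv0, ffv1]; exact iff_of_true (by rw [pathGraph_adj]; decide) h01
      · rw [ffv0, ffv2]; exact iff_of_false (by rw [pathGraph_adj]; decide) hn02
      · rw [ffv0, ffv3]; exact iff_of_false (by rw [pathGraph_adj]; decide) hn03
      · rw [ffv1, ffv0]; exact iff_of_true (by rw [pathGraph_adj]; decide) h01.symm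
      · rw [ffv1]; exact iff_of_false (by rw [pathGraph_adj]; decide) (G.loopless.irrefl _)
      · rw [ffv1, ffv2]; exact iff_of_true (by rw [pathGraph_adj]; decide) h12
      · rw [ffv1, ffv3]; exact iff_of_false (by rw [pathGraph_adj]; decide) hn13'
      · rw [ffv2, ffv0]; exact iff_of_false (by rw [pathGraph_adj]; decide) (fun h => hn02 h.symm)
      · rw [ffv2, ffv1]; exact iff_of_true (by rw [pathGraph_adj]; decide) h12.symm
      · rw [ffv2]; exact iff_of_false (by rw [pathGraph_adj]; decide) (G.loopless.irrefl _)
      · rw [ffv2, ffv3]; exact iff_of_true (by rw [pathGraph_adj]; decide) h23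
      · rw [ffv3, ffv0]; exact iff_of_false (by rw [pathGraph_adj]; decide) (fun h => hn03 h.symm)
      · rw [ffv3, ffv1]; exact iff_of_false (by rw [pathGraph_adj]; decide) (fun h => hn13' h.symm)
      · rw [ffv3, ffv2]; exact iff_of_true (by rw [pathGraph_adj]; decide) h23.symm
      · rw [ffv3]; exact iff_of_false (by rw [pathGraph_adj]; decide) (G.loopless.irrefl _)
  · rintro ⟨h4, heven, hcase⟩ v
    rcases hcase with hφ | ⟨M, hM, rfl⟩
    · obtain ⟨φ⟩ := hφ
      show ({u | G.dist v u = 2}).ncard = 1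
      have hset : {u | G.dist v u = 2} = {φ.symm (![2, 3, 0, 1] (φ v))} := by
        ext u
        simp only [Set.mem_setOf_eq, Set.mem_singleton_iff]
        rw [← iso_dist' φ v u, p4_dist_two_iff' (φ v) (φ u)]
        constructor
        · intro h
          have : φ.symm (φ u) = φ.symm (![2, 3, 0, 1] (φ v)) := by rw [h]
          simpa using this
        · intro h
          rw [h]
          simp
      rw [hset]
      exact Set.ncard_singleton _
    · show ({u | ((⊤ : SimpleGraph V) \ M).dist v u = 2}).ncard = 1
      obtain ⟨u₀, hu₀, huniq⟩ := hM v
      have hne : v ≠ u₀ := M.ne_of_adj hu₀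
      have hset : {u | ((⊤ : SimpleGraph V) \ M).dist v u = 2} = {u₀} := by
        ext u
        simp only [Set.mem_setOf_eq, Set.mem_singleton_iff]
        constructor
        · intro h
          have hvu : v ≠ u := by
            intro he; rw [he, SimpleGraph.dist_self] at h; omega
          have hnadj : ¬ ((⊤ : SimpleGraph V) \ M).Adj v u := by
            intro ha
            have := dist_eq_one_iff_adj.mpr ha
            omega
          have hm : M.Adj v u := by
            by_contra hm
            exact hnadj ((sdiff_adj _ _ _ _).mpr ⟨(top_adj _ _).mpr hvu, hm⟩)
          exact huniq u hm
        · intro heq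
          rw [heq]
          have hnadj : ¬ ((⊤ : SimpleGraph V) \ M).Adj v u₀ :=
            fun h => ((sdiff_adj _ _ _ _).mp h).2 hu₀
          have hex : ∃ w : V, w ≠ v ∧ w ≠ u₀ := by
            by_contra hco
            push_neg at hco
            have hsub : (Finset.univ : Finset V) ⊆ {v, u₀} := by
              intro w _
              simp only [Finset.mem_insert, Finset.mem_singleton]
              by_cases h : w = v
              · exact Or.inl h
              · exact Or.inr (hco w h)
            have hc1 := Finset.card_le_card hsub
            have hc2 : ({v, u₀} : Finset V).card ≤ 2 := by
              refine le_trans (Finset.card_insert_le _ _) ?_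
              simp
            have hc3 : Fintype.card V ≤ 2 := by
              rw [← Finset.card_univ]
              omega
            omega
          obtain ⟨w, hwv, hwu⟩ := hex
          have haw : ((⊤ : SimpleGraph V) \ M).Adj v w := by
            rw [sdiff_adj, top_adj]
            exact ⟨fun h => hwv h.symm, fun h => hwu (huniq w h)⟩
          have hbw : ((⊤ : SimpleGraph V) \ M).Adj w u₀ := by
            rw [sdiff_adj, top_adj]
            refine ⟨hwu, fun h => ?_⟩
            obtain ⟨x, hx, hxu⟩ := hM u₀
            exact hwv ((hxu w h.symm).trans (hxu v hu₀.symm).symm)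
          exact dist_eq_two_of' haw hbw hnadj hne
      rw [hset]
      exact Set.ncard_singleton _
end

section
/- Let G be a connected graph whose metamour graph is not connected, and suppose that for some connected component M_i of the metamour graph M, the induced subgraph G[V(M_i)] is connected. Then G equals the join of the complements of the connected components of M: G = complement(M_1) ∇ ... ∇ complement(M_t), where M_1, ..., M_t are the connected components of M and t ≥ 2. -/
/-- If G is connected, its metamour graph M is disconnected, and the
subgraph of G induced on the vertices of some connected component of M is connected,
then G is the join of the complements of the connected components of M, i.e., G
equals the complement of M. -/
theorem join_decomposition_of_disconnected_metamour {V : Type*} (G : SimpleGraph V)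
    (hG : G.Connected) (hM : ¬ G.metamour.Connected)
    (h : ∃ c : G.metamour.ConnectedComponent, (G.induce c.supp).Connected) :
    G = G.metamourᶜ := by
  classical
  obtain ⟨C, hC⟩ := h
  -- vertices at distance 2 lie in the same metamour component
  have hmem : ∀ x y : V, x ∈ C.supp → y ∉ C.supp → G.dist x y ≠ 2 := by
    intro x y hx hy h2
    apply hy
    rw [SimpleGraph.ConnectedComponent.mem_supp_iff] at hx ⊢
    rw [← hx]
    exact (SimpleGraph.ConnectedComponent.sound ((show G.metamour.Adj x y from h2).reachable)).symm
  -- descent: from any c ∈ C, find a vertex of C adjacent to d ∉ C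
  have descent : ∀ n : ℕ, ∀ c ∈ C.supp, ∀ d, d ∉ C.supp → G.dist c d = n →
      ∃ c0 ∈ C.supp, G.Adj c0 d := by
    intro n
    induction n using Nat.strong_induction_on with
    | _ n ih =>
      intro c hc d hd hn
      have hne : c ≠ d := fun he => hd (he ▸ hc)
      have hpos : 0 < G.dist c d := hG.pos_dist_of_ne hne
      match n, hn with
      | 0, hn => omega
      | 1, hn => exact ⟨c, hc, SimpleGraph.dist_eq_one_iff_adj.mp hn⟩
      | 2, hn => exact absurd hn (hmem c d hc hd)
      | (n+3), hn =>
        obtain ⟨p, hp⟩ := (hG c d).exists_walk_length_eq_dist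
        rw [hn] at hp
        cases p with
        | nil => simp at hp
        | cons h1 q =>
          cases q with
          | nil => simp at hp
          | @cons a b _ h2 r =>
            simp only [SimpleGraph.Walk.length_cons] at hp
            have hr : r.length = n + 1 := by omega
            have hbd_le : G.dist b d ≤ n + 1 := hr ▸ SimpleGraph.dist_le r
            have hcb_le : G.dist c b ≤ 2 := by
              have := SimpleGraph.dist_le (SimpleGraph.Walk.cons h1 (SimpleGraph.Walk.cons h2 SimpleGraph.Walk.nil))
              simpa using this
            have htri : G.dist c d ≤ G.dist c b + G.dist b d := hG.dist_triangle
            have hbd : G.dist b d = n + 1 := by omega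
            have hcb : G.dist c b = 2 := by omega
            have hb : b ∈ C.supp := by
              by_contra hb
              exact hmem c b hc hb hcb
            exact ih (n + 1) (by omega) b hb d hd hbd
  -- propagation along the connected induced subgraph
  have prop : ∀ d, d ∉ C.supp → ∀ x y : C.supp,
      (G.induce C.supp).Walk x y → G.dist d (x : V) ≤ 1 → G.dist d (y : V) ≤ 1 := by
    intro d hd x y p
    induction p with
    | nil => exact id
    | @cons u w y hadj q ih =>
      intro hu
      apply ih
      have hGadj : G.Adj (u : V) (w : V) := hadj
      have h1 : G.dist d (w : V) ≤ G.dist d (u : V) + G.dist (u : V) (w : V) :=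
        hG.dist_triangle
      have h2 : G.dist (u : V) (w : V) = 1 := SimpleGraph.dist_eq_one_iff_adj.mpr hGadj
      have h3 : G.dist d (w : V) ≠ 2 := by
        intro hx
        exact hmem (w : V) d w.2 hd (by rwa [SimpleGraph.dist_comm])
      omega
  -- every vertex outside C is adjacent to every vertex of C
  have key : ∀ d, d ∉ C.supp → ∀ c ∈ C.supp, G.Adj d c := by
    intro d hd c hcm
    obtain ⟨c0, hc0, hadj⟩ := descent (G.dist c d) c hcm d hd rfl
    obtain ⟨q⟩ := hC.preconnected ⟨c0, hc0⟩ ⟨c, hcm⟩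
    have hdist : G.dist d c ≤ 1 := prop d hd ⟨c0, hc0⟩ ⟨c, hcm⟩ q
      (by rw [SimpleGraph.dist_comm]; exact (SimpleGraph.dist_eq_one_iff_adj.mpr hadj).le)
    have hne : d ≠ c := fun he => hd (he ▸ hcm)
    have hpos : 0 < G.dist d c := hG.pos_dist_of_ne hne
    exact SimpleGraph.dist_eq_one_iff_adj.mp (by omega)
  -- get a vertex outside C
  have hd0 : ∃ d0, d0 ∉ C.supp := by
    have hV : Nonempty V := hG.nonempty
    rw [SimpleGraph.connected_iff] at hM
    have hpre : ¬ G.metamour.Preconnected := fun hp => hM ⟨hp, hV⟩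
    by_contra hall
    push_neg at hall
    apply hpre
    intro u v
    have hu := (SimpleGraph.ConnectedComponent.mem_supp_iff _ _).mp (hall u)
    have hv := (SimpleGraph.ConnectedComponent.mem_supp_iff _ _).mp (hall v)
    exact SimpleGraph.ConnectedComponent.exact (hu.trans hv.symm)
  obtain ⟨d0, hd0⟩ := hd0
  have hc0 : ∃ c0, c0 ∈ C.supp := by
    obtain ⟨x, hx⟩ := C.exists_rep
    exact ⟨x, (SimpleGraph.ConnectedComponent.mem_supp_iff _ _).mpr hx⟩
  obtain ⟨cc, hcc⟩ := hc0
  -- diameter at most 2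
  have diam : ∀ u v : V, u ≠ v → G.dist u v ≤ 2 := by
    intro u v huv
    by_cases hu : u ∈ C.supp <;> by_cases hv : v ∈ C.supp
    · have h1 : G.Adj d0 u := key d0 hd0 u hu
      have h2 : G.Adj d0 v := key d0 hd0 v hv
      have := hG.dist_triangle (u := u) (v := d0) (w := v)
      have e1 : G.dist u d0 = 1 := SimpleGraph.dist_eq_one_iff_adj.mpr h1.symm
      have e2 : G.dist d0 v = 1 := SimpleGraph.dist_eq_one_iff_adj.mpr h2
      omega
    · have : G.Adj v u := key v hv u hu
      have : G.dist u v = 1 := SimpleGraph.dist_eq_one_iff_adj.mpr this.symm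
      omega
    · have : G.dist u v = 1 := SimpleGraph.dist_eq_one_iff_adj.mpr (key u hu v hv)
      omega
    · have h1 : G.Adj u cc := key u hu cc hcc
      have h2 : G.Adj v cc := key v hv cc hcc
      have := hG.dist_triangle (u := u) (v := cc) (w := v)
      have e1 : G.dist u cc = 1 := SimpleGraph.dist_eq_one_iff_adj.mpr h1
      have e2 : G.dist cc v = 1 := SimpleGraph.dist_eq_one_iff_adj.mpr h2.symm
      omega
  ext u v
  rw [SimpleGraph.compl_adj]
  constructor
  · intro hadj
    refine ⟨hadj.ne, ?_⟩
    intro h2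
    have : G.dist u v = 2 := h2
    have : G.dist u v = 1 := SimpleGraph.dist_eq_one_iff_adj.mpr hadj
    omega
  · rintro ⟨hne, h2⟩
    have h2' : G.dist u v ≠ 2 := h2
    have hle := diam u v hne
    have hpos : 0 < G.dist u v := hG.pos_dist_of_ne hne
    exact SimpleGraph.dist_eq_one_iff_adj.mp (by omega)
end

section
/- Let k ≥ 0 and let G be a connected graph in which every vertex has at most k metamours. If the metamour graph of G has at least three connected components M_1, ..., M_t (t ≥ 3), then G = complement(M_1) ∇ ... ∇ complement(M_t). -/
namespace MetamourAux

open SimpleGraph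

variable {V : Type*} {G : SimpleGraph V}

lemma dist_le_two_of_adj_adj {x a b : V} (h1 : G.Adj x a) (h2 : G.Adj a b) :
    G.dist x b ≤ 2 :=
  SimpleGraph.dist_le (SimpleGraph.Walk.cons h1 (SimpleGraph.Walk.cons h2 SimpleGraph.Walk.nil))

lemma adj_of_dist_le_two (hG : G.Connected) {x b : V} (hle : G.dist x b ≤ 2)
    (hne : ¬ G.metamour.Reachable x b) : G.Adj x b := by
  have hxb : x ≠ b := by rintro rfl; exact hne (SimpleGraph.Reachable.refl x)
  have h0 : 0 < G.dist x b := hG.pos_dist_of_ne hxb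
  have h2 : G.dist x b ≠ 2 := fun h => hne (SimpleGraph.Adj.reachable (show G.metamour.Adj x b from h))
  have h1 : G.dist x b = 1 := by omega
  exact SimpleGraph.dist_eq_one_iff_adj.mp h1

lemma walk_adj (hG : G.Connected) {x v : V} :
    ∀ {b : V} (q : G.Walk b v) {a : V} (h : G.Adj a b),
      (SimpleGraph.Walk.cons h q).length = G.dist a v → G.Adj x a →
      ¬ G.metamour.Reachable x a → ¬ G.metamour.Reachable x b → G.Adj x v := by
  intro b q
  induction q with
  | nil =>
    intro a h _ hxa _ hrb
    exact adj_of_dist_le_two hG (dist_le_two_of_adj_adj hxa h) hrb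
  | @cons b c v h' q' ih =>
    intro a h hlen hxa hra hrb
    have hq'le : G.dist c v ≤ q'.length := SimpleGraph.dist_le _
    have hablen : G.dist a b ≤ 1 := SimpleGraph.dist_le (SimpleGraph.Walk.cons h SimpleGraph.Walk.nil)
    have htri : G.dist a v ≤ G.dist a b + G.dist b v := hG.dist_triangle
    have hbvle : G.dist b v ≤ (SimpleGraph.Walk.cons h' q').length := SimpleGraph.dist_le _
    have hlen' : q'.length + 2 = G.dist a v := by
      simpa [SimpleGraph.Walk.length_cons] using hlen
    have hdistbv : (SimpleGraph.Walk.cons h' q').length = G.dist b v := by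
      simp only [SimpleGraph.Walk.length_cons] at hbvle ⊢
      omega
    have hxb : G.Adj x b := adj_of_dist_le_two hG (dist_le_two_of_adj_adj hxa h) hrb
    have hac2 : G.dist a c = 2 := by
      have hle2 : G.dist a c ≤ 2 := dist_le_two_of_adj_adj h h'
      have htri2 : G.dist a v ≤ G.dist a c + G.dist c v := hG.dist_triangle
      omega
    have hrc : ¬ G.metamour.Reachable x c := by
      intro hr
      refine hra (hr.trans (SimpleGraph.Adj.reachable ?_))
      show G.dist c a = 2
      rwa [SimpleGraph.dist_comm]
    exact ih h' hdistbv hxb hrb hrc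

lemma step2 (hG : G.Connected) {u v : V} {m : ℕ} (hd : G.dist u v = m + 2) :
    ∃ y, G.dist u y = 2 ∧ G.dist y v = m := by
  obtain ⟨p, hp⟩ := hG.exists_walk_length_eq_dist u v
  cases p with
  | nil => rw [hd] at hp; simp at hp
  | @cons _ b _ h p' =>
    cases p' with
    | nil => rw [hd] at hp; simp at hp
    | @cons _ c _ h' q =>
      have hql : q.length = m := by
        simp only [SimpleGraph.Walk.length_cons] at hp
        omega
      have hcv : G.dist c v ≤ m := hql ▸ SimpleGraph.dist_le q
      have huc : G.dist u c ≤ 2 := dist_le_two_of_adj_adj h h'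
      have htri : G.dist u v ≤ G.dist u c + G.dist c v := hG.dist_triangle
      have htri2 : G.dist u v ≤ G.dist u c + G.dist c v := htri
      exact ⟨c, by omega, by omega⟩

lemma reach_or_exists (hG : G.Connected) :
    ∀ n {u v : V}, G.dist u v = n → u ≠ v →
      G.metamour.Reachable u v ∨ ∃ x, G.Adj x v ∧ G.metamour.Reachable u x := by
  intro n
  induction n using Nat.strong_induction_on with
  | _ n ih =>
    intro u v hd hne
    match n, hd with
    | 0, hd => exact absurd hd (hG.pos_dist_of_ne hne).ne'
    | 1, hd =>
      exact Or.inr ⟨u, SimpleGraph.dist_eq_one_iff_adj.mp hd, SimpleGraph.Reachable.refl u⟩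
    | 2, hd =>
      exact Or.inl (SimpleGraph.Adj.reachable (show G.metamour.Adj u v from hd))
    | (m + 3), hd =>
      obtain ⟨y, hy2, hyv⟩ := step2 hG (show G.dist u v = (m + 1) + 2 from hd)
      have hyne : y ≠ v := by
        intro hyv'
        rw [hyv', SimpleGraph.dist_self] at hyv
        omega
      have huy : G.metamour.Reachable u y :=
        SimpleGraph.Adj.reachable (show G.metamour.Adj u y from hy2)
      rcases ih (m + 1) (by omega) hyv hyne with hl | ⟨x, hxv, hyx⟩
      · exact Or.inl (huy.trans hl)
      · exact Or.inr ⟨x, hxv, huy.trans hyx⟩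

end MetamourAux

/-- If G is connected with maximum metamour-degree at most k and its
metamour graph has at least three connected components, then G is the join of the
complements of the connected components of the metamour graph, i.e., G equals the
complement of its metamour graph. -/
theorem join_decomposition_of_three_components {V : Type*} [Fintype V] (k : ℕ)
    (G : SimpleGraph V) (hG : G.Connected)
    (hk : ∀ v : V, {u | G.metamour.Adj v u}.ncard ≤ k)
    (h3 : ∃ c d e : G.metamour.ConnectedComponent, c ≠ d ∧ c ≠ e ∧ d ≠ e) :
    G = G.metamourᶜ := by
  classical
  have claim : ∀ u v : V, G.dist u v < 3 := by
    by_contra hcon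
    push_neg at hcon
    obtain ⟨u, v, huv⟩ := hcon
    obtain ⟨p, hp⟩ := hG.exists_walk_length_eq_dist u v
    cases p with
    | nil => rw [SimpleGraph.Walk.length_nil] at hp; omega
    | @cons _ b _ h q =>
      set A := G.metamour.connectedComponentMk u with hA
      set B := G.metamour.connectedComponentMk b with hB
      have hC : ∃ C : G.metamour.ConnectedComponent, C ≠ A ∧ C ≠ B := by
        by_contra hCc
        push_neg at hCc
        obtain ⟨c, d, e, hcd, hce, hde⟩ := h3
        have h1 : c = A ∨ c = B := or_iff_not_imp_left.mpr (hCc c)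
        have h2 : d = A ∨ d = B := or_iff_not_imp_left.mpr (hCc d)
        have h3' : e = A ∨ e = B := or_iff_not_imp_left.mpr (hCc e)
        rcases h1 with rfl | rfl <;> rcases h2 with h2 | h2 <;> rcases h3' with h3' | h3' <;>
          simp_all
      obtain ⟨C, hCA, hCB⟩ := hC
      obtain ⟨w, hw⟩ := C.exists_rep
      have hwu : w ≠ u := by
        rintro rfl
        exact hCA hw.symm
      rcases MetamourAux.reach_or_exists hG (G.dist w u) rfl hwu with hl | ⟨x, hxu, hwx⟩
      · exact hCA (hw.symm.trans (SimpleGraph.ConnectedComponent.sound hl))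
      · have hxC : G.metamour.connectedComponentMk x = C :=
          (SimpleGraph.ConnectedComponent.sound hwx).symm.trans hw
        have hrxu : ¬ G.metamour.Reachable x u := by
          intro hr
          exact hCA (hxC.symm.trans (SimpleGraph.ConnectedComponent.sound hr))
        have hrxb : ¬ G.metamour.Reachable x b := by
          intro hr
          exact hCB (hxC.symm.trans (SimpleGraph.ConnectedComponent.sound hr))
        have hxv : G.Adj x v := MetamourAux.walk_adj hG q h hp hxu hrxu hrxb
        have : G.dist u v ≤ 2 :=
          MetamourAux.dist_le_two_of_adj_adj hxu.symm hxv
        omega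
  ext u v
  rw [SimpleGraph.compl_adj]
  constructor
  · intro hadj
    refine ⟨hadj.ne, ?_⟩
    have h1 : G.dist u v = 1 := SimpleGraph.dist_eq_one_iff_adj.mpr hadj
    show ¬ G.dist u v = 2
    omega
  · rintro ⟨hne, h2⟩
    have h2' : ¬ G.dist u v = 2 := h2
    have h0 : 0 < G.dist u v := hG.pos_dist_of_ne hne
    have h3' : G.dist u v < 3 := claim u v
    have : G.dist u v = 1 := by omega
    exact SimpleGraph.dist_eq_one_iff_adj.mp this
end

section
/- For n ≥ 5, the cycle graph C_n is 2-metamour-regular; moreover, if n is odd then the metamour graph of C_n is connected (it is a cycle of length n), while if n is even the metamour graph of C_n consists of exactly two disjoint cycles of length n/2. -/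
open Fin.CommRing Fin.NatCast

open SimpleGraph in
lemma finofnat_ne_zero (N k : ℕ) [h : NeZero k] (hk : k < N+5) :
    (OfNat.ofNat k : Fin (N+5)) ≠ 0 := by
  simp only [Fin.ext_iff, OfNat.ofNat, Fin.ofNat, Zero.zero]
  simp [Nat.mod_eq_of_lt hk]
  intro hd
  exact h.out hd


open SimpleGraph in
lemma metamour_adj (N : ℕ) (u v : Fin (N+5)) :
    (cycleGraph (N+5)).metamour.Adj u v ↔ u - v = 2 ∨ v - u = 2 := by
  have h2 : (2 : Fin (N+5)) ≠ 0 := finofnat_ne_zero N 2 (by omega)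
  have h3 : (3 : Fin (N+5)) ≠ 0 := finofnat_ne_zero N 3 (by omega)
  constructor
  · intro h
    have hne : u ≠ v := by rintro rfl; simp [metamour, SimpleGraph.dist_self] at h
    simp only [metamour] at h
    obtain ⟨p, hp⟩ := SimpleGraph.exists_walk_of_dist_ne_zero
      (by omega : (cycleGraph (N+5)).dist u v ≠ 0)
    rw [h] at hp
    match p, hp with
    | .cons (v := w) h1 (.cons hh .nil), _ =>
      rw [cycleGraph_adj] at h1 hh
      rcases h1 with h1 | h1 <;> rcases hh with hh | hh
      · left; linear_combination h1 + hh
      · exact absurd (sub_eq_zero.mp (by linear_combination h1 - hh : u - v = 0)) hne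
      · exact absurd (sub_eq_zero.mp (by linear_combination hh - h1 : u - v = 0)) hne
      · right; linear_combination h1 + hh
  · intro h
    have key : ∀ a b : Fin (N+5), a - b = 2 → (cycleGraph (N+5)).dist a b = 2 := by
      intro a b hab
      have hne : a ≠ b := fun he => h2 (by rw [← hab, he, sub_self])
      have hnadj : ¬ (cycleGraph (N+5)).Adj a b := by
        rw [cycleGraph_adj]
        rintro (hx | hx)
        · exact absurd (by linear_combination hx - hab : (1 : Fin (N+5)) = 0) one_ne_zero
        · exact h3 (by linear_combination - hab - hx)
      have hadj1 : (cycleGraph (N+5)).Adj a (a - 1) := by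
        rw [cycleGraph_adj]; left; ring
      have hadj2 : (cycleGraph (N+5)).Adj (a - 1) b := by
        rw [cycleGraph_adj]; left; linear_combination hab
      have hle := SimpleGraph.dist_le (Walk.cons hadj1 (Walk.cons hadj2 Walk.nil))
      simp only [Walk.length_cons, Walk.length_nil] at hle
      have h0 : (cycleGraph (N+5)).dist a b ≠ 0 := by
        rw [SimpleGraph.dist_ne_zero_iff_ne_and_reachable]
        exact ⟨hne, Walk.reachable (Walk.cons hadj1 (Walk.cons hadj2 Walk.nil))⟩
      have h1 : (cycleGraph (N+5)).dist a b ≠ 1 := fun he =>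
        hnadj (SimpleGraph.dist_eq_one_iff_adj.mp he)
      omega
    rcases h with h | h
    · exact key u v h
    · show (cycleGraph (N+5)).dist u v = 2
      rw [SimpleGraph.dist_comm]; exact key v u h


open SimpleGraph in
lemma part1 (N : ℕ) (v : Fin (N+5)) : (cycleGraph (N+5)).metamourDegree v = 2 := by
  have h4 : (4 : Fin (N+5)) ≠ 0 := finofnat_ne_zero N 4 (by omega)
  have hset : {u | (cycleGraph (N+5)).metamour.Adj v u} = {v - 2, v + 2} := by
    ext u
    simp only [Set.mem_setOf_eq, metamour_adj, Set.mem_insert_iff, Set.mem_singleton_iff]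
    constructor
    · rintro (h | h)
      · left; linear_combination -h
      · right; linear_combination h
    · rintro (rfl | rfl)
      · left; ring
      · right; ring
  rw [SimpleGraph.metamourDegree, hset, Set.ncard_pair]
  intro he; exact h4 (by linear_combination -he)


open SimpleGraph in
lemma part2 (N : ℕ) (hodd : Odd (N+5)) :
    (cycleGraph (N+5)).metamour.Connected ∧
      Nonempty ((cycleGraph (N+5)).metamour ≃g cycleGraph (N+5)) := by
  obtain ⟨m, hm⟩ : ∃ m, N+6 = 2*m := by
    obtain ⟨k, hk⟩ := hodd; exact ⟨k+1, by omega⟩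
  set K : Fin (N+5) := (m : Fin (N+5)) with hKdef
  have hK : 2 * K = 1 := by
    calc 2 * K = ((2*m : ℕ) : Fin (N+5)) := by push_cast; ring
    _ = ((N+5+1 : ℕ) : Fin (N+5)) := by rw [← hm]
    _ = 1 := by rw [Nat.cast_add, Nat.cast_one, Fin.natCast_self, zero_add]
  have key : ∀ x y : Fin (N+5), K * x - K * y = 1 ↔ x - y = 2 := by
    intro x y
    constructor
    · intro hxy; linear_combination 2*hxy - (x-y)*hK
    · intro hxy; linear_combination K*hxy + hK
  have e : (cycleGraph (N+5)).metamour ≃g cycleGraph (N+5) := by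
    refine ⟨⟨fun x => K * x, fun y => 2 * y, ?_, ?_⟩, ?_⟩
    · intro x; show 2 * (K * x) = x; rw [← mul_assoc, hK, one_mul]
    · intro y; show K * (2 * y) = y; rw [← mul_assoc, mul_comm K 2, hK, one_mul]
    · intro a b
      show (cycleGraph (N+5)).Adj (K*a) (K*b) ↔ _
      rw [cycleGraph_adj, metamour_adj, key, key]
  refine ⟨?_, ⟨e⟩⟩
  exact ⟨e.preconnected_iff.mpr cycleGraph_preconnected⟩


open SimpleGraph in
lemma metamour_adj' (N : ℕ) (u v : Fin (N+5)) :
    (cycleGraph (N+5)).metamour.Adj u v ↔ (u - v).val = 2 ∨ (v - u).val = 2 := by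
  have h2 : ∀ w : Fin (N+5), w = 2 ↔ w.val = 2 := fun w => by
    rw [Fin.ext_iff, Fin.val_two]
  rw [metamour_adj, h2, h2]


open SimpleGraph in
lemma part3 (N : ℕ) (heven : Even (N+5)) :
    Nonempty ((cycleGraph (N+5)).metamour ≃g
      (cycleGraph ((N+5)/2) ⊕g cycleGraph ((N+5)/2))) := by
  obtain ⟨m, hm⟩ : ∃ m, N+5 = 2*m := by obtain ⟨k, hk⟩ := heven; exact ⟨k, by omega⟩
  rw [show (N+5)/2 = m from by omega]
  have subval : ∀ (k : ℕ) (a b : Fin k), (a - b).val = (k - b.val + a.val) % k :=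
    fun k a b => rfl
  have oddne : ∀ x : ℕ, x % 2 = 1 → x % (N+5) ≠ 2 := by
    intro x hx h
    have h2 : (2:ℕ) ∣ N+5 := ⟨m, hm⟩
    have := Nat.mod_mod_of_dvd x h2
    omega
  have hval2 : ∀ (r : ℕ), r ≤ 1 → ∀ (a b : Fin m) (x y : Fin (N+5)),
      x.val = 2*a.val + r → y.val = 2*b.val + r → ((x - y).val = 2 ↔ (a - b).val = 1) := by
    intro r hr a b x y hx hy
    have ha := a.isLt; have hb := b.isLt
    rw [subval, subval, hx, hy, hm,
      show 2*m - (2*b.val + r) + (2*a.val + r) = 2*(m - b.val + a.val) from by omega,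
      Nat.mul_mod_mul_left]
    generalize (m - b.val + a.val) % m = X
    omega
  have hcross : ∀ (x y : Fin (N+5)), x.val % 2 = 0 → y.val % 2 = 1 →
      ¬ (cycleGraph (N+5)).metamour.Adj x y := by
    intro x y hx hy h
    rw [metamour_adj', subval, subval] at h
    have hxl := x.isLt; have hyl := y.isLt
    rcases h with h | h
    · exact oddne (N+5 - y.val + x.val) (by omega) h
    · exact oddne (N+5 - x.val + y.val) (by omega) h
  have f : ∀ i : Fin m, 2*i.val < N+5 := fun i => by have := i.isLt; omega
  have f' : ∀ i : Fin m, 2*i.val+1 < N+5 := fun i => by have := i.isLt; omega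
  refine ⟨(RelIso.symm ⟨Equiv.mk
    (Sum.elim (fun i => (⟨2*i.val, f i⟩ : Fin (N+5))) (fun i => ⟨2*i.val+1, f' i⟩))
    (fun x => if hx : x.val % 2 = 0 then .inl ⟨x.val/2, by have := x.isLt; omega⟩
      else .inr ⟨x.val/2, by have := x.isLt; omega⟩) ?_ ?_, ?_⟩)⟩
  · rintro (i | i)
    · simp only [Sum.elim_inl]
      simp only [show 2*i.val % 2 = 0 by omega, ↓reduceDIte]
      refine congrArg Sum.inl (Fin.ext ?_)
      show 2*i.val/2 = i.val
      omega
    · simp only [Sum.elim_inr]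
      simp only [show ¬((2*i.val+1) % 2 = 0) by omega, ↓reduceDIte]
      refine congrArg Sum.inr (Fin.ext ?_)
      show (2*i.val+1)/2 = i.val
      omega
  · intro x
    by_cases hx : x.val % 2 = 0
    · simp only [dif_pos hx, Sum.elim_inl]
      refine Fin.ext ?_
      show 2*(x.val/2) = x.val
      omega
    · simp only [dif_neg hx, Sum.elim_inr]
      refine Fin.ext ?_
      show 2*(x.val/2)+1 = x.val
      omega
  · intro a b
    match a, b with
    | Sum.inl i, Sum.inl j =>
      simp only [Equiv.coe_fn_mk, Sum.elim_inl, Sum.elim_inr]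
      show (cycleGraph (N+5)).metamour.Adj ⟨2*i.val, f i⟩ ⟨2*j.val, f j⟩ ↔ _
      rw [metamour_adj']
      simp only [sum_adj, cycleGraph_adj']
      rw [hval2 0 (by omega) i j ⟨2*i.val, f i⟩ ⟨2*j.val, f j⟩ (by simp) (by simp),
        hval2 0 (by omega) j i ⟨2*j.val, f j⟩ ⟨2*i.val, f i⟩ (by simp) (by simp)]
    | Sum.inl i, Sum.inr j =>
      simp only [Equiv.coe_fn_mk, Sum.elim_inl, Sum.elim_inr]
      show (cycleGraph (N+5)).metamour.Adj ⟨2*i.val, f i⟩ ⟨2*j.val+1, f' j⟩ ↔ _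
      simp only [sum_adj, iff_false]
      exact hcross _ _ (by simp only [Fin.val_mk]; omega) (by simp only [Fin.val_mk]; omega)
    | Sum.inr i, Sum.inl j =>
      simp only [Equiv.coe_fn_mk, Sum.elim_inl, Sum.elim_inr]
      show (cycleGraph (N+5)).metamour.Adj ⟨2*i.val+1, f' i⟩ ⟨2*j.val, f j⟩ ↔ _
      simp only [sum_adj, iff_false]
      intro h
      exact hcross _ _ (by simp only [Fin.val_mk]; omega) (by simp only [Fin.val_mk]; omega)
        h.symm
    | Sum.inr i, Sum.inr j =>
      simp only [Equiv.coe_fn_mk, Sum.elim_inl, Sum.elim_inr]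
      show (cycleGraph (N+5)).metamour.Adj ⟨2*i.val+1, f' i⟩ ⟨2*j.val+1, f' j⟩ ↔ _
      rw [metamour_adj']
      simp only [sum_adj, cycleGraph_adj']
      rw [hval2 1 (by omega) i j ⟨2*i.val+1, f' i⟩ ⟨2*j.val+1, f' j⟩ (by simp) (by simp),
        hval2 1 (by omega) j i ⟨2*j.val+1, f' j⟩ ⟨2*i.val+1, f' i⟩ (by simp) (by simp)]


/-- For n ≥ 5 the cycle C_n is 2-metamour-regular; for odd n its
metamour graph is connected and is a cycle of length n, while for even n its
metamour graph is the disjoint union of two cycles of length n/2. -/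
theorem cycleGraph_metamour (n : ℕ) (hn : 5 ≤ n) :
    (∀ v : Fin n, (SimpleGraph.cycleGraph n).metamourDegree v = 2) ∧
    (Odd n → (SimpleGraph.cycleGraph n).metamour.Connected ∧
      Nonempty ((SimpleGraph.cycleGraph n).metamour ≃g SimpleGraph.cycleGraph n)) ∧
    (Even n → Nonempty ((SimpleGraph.cycleGraph n).metamour ≃g
      (SimpleGraph.cycleGraph (n / 2) ⊕g SimpleGraph.cycleGraph (n / 2)))) := by
  obtain ⟨N, rfl⟩ : ∃ N, n = N + 5 := ⟨n - 5, by omega⟩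
  exact ⟨part1 N, fun hodd => part2 N hodd, fun heven => part3 N heven⟩
end

section
/- For n ≥ 5, the complement of the cycle graph C_n is a connected 2-metamour-regular graph, and its metamour graph equals C_n. -/
open Fin.CommRing

/-- For n ≥ 5 the complement of the cycle C_n is connected and
2-metamour-regular, and its metamour graph equals C_n. -/
theorem compl_cycleGraph_metamour (n : ℕ) (hn : 5 ≤ n) :
    ((SimpleGraph.cycleGraph n)ᶜ).Connected ∧
    (∀ v : Fin n, ((SimpleGraph.cycleGraph n)ᶜ).metamourDegree v = 2) ∧
    ((SimpleGraph.cycleGraph n)ᶜ).metamour = SimpleGraph.cycleGraph n := by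
  haveI : NeZero n := ⟨by omega⟩
  set C := SimpleGraph.cycleGraph n with hC
  -- casts of small positive naturals are nonzero in `Fin n`
  have hz : ∀ k : ℕ, 0 < k → k < n → ((k : Fin n) ≠ 0) := by
    intro k hk hk' h
    rw [Fin.natCast_eq_zero] at h
    have := Nat.le_of_dvd hk h
    omega
  have h1v : (1 : Fin n).val = 1 := by
    rw [Fin.val_one', Nat.mod_eq_of_lt (by omega)]
  have adj_iff : ∀ u v : Fin n, C.Adj u v ↔ u - v = 1 ∨ v - u = 1 := by
    intro u v
    rw [hC, SimpleGraph.cycleGraph_adj']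
    constructor
    · rintro (h | h)
      · exact Or.inl (by rw [Fin.ext_iff, h1v, h])
      · exact Or.inr (by rw [Fin.ext_iff, h1v, h])
    · rintro (h | h)
      · exact Or.inl (by rw [h, h1v])
      · exact Or.inr (by rw [h, h1v])
  -- non-adjacency at "distance" k, 2 ≤ k ≤ n - 2
  have noadj : ∀ (a : Fin n) (k : ℕ), 2 ≤ k → k + 2 ≤ n → ¬ C.Adj a (a + (k : Fin n)) := by
    intro a k hk hkn h
    rw [adj_iff] at h
    rcases h with h | h
    · have h2 : ((k + 1 : ℕ) : Fin n) = 0 := by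
        push_cast
        linear_combination -h
      rw [Fin.natCast_eq_zero] at h2
      have := Nat.le_of_dvd (by omega) h2
      omega
    · have h2 : ((k - 1 : ℕ) : Fin n) = 0 := by
        push_cast [Nat.cast_sub (by omega : 1 ≤ k)]
        linear_combination h
      rw [Fin.natCast_eq_zero] at h2
      have := Nat.le_of_dvd (by omega) h2
      omega
  have hne : ∀ (a : Fin n) (k : ℕ), 0 < k → k < n → a + (k : Fin n) ≠ a := by
    intro a k hk hkn h
    exact hz k hk hkn (by linear_combination h)
  -- common neighbor in the complement for consecutive cycle vertices
  have helper : ∀ u : Fin n, ∃ w, (Cᶜ).Adj u w ∧ (Cᶜ).Adj w (u + 1) := by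
    intro u
    refine ⟨u + (3 : ℕ), ⟨(hne u 3 (by omega) (by omega)).symm, noadj u 3 (by omega) (by omega)⟩, ?_⟩
    have e1 : u + ((3 : ℕ) : Fin n) = (u + 1) + ((2 : ℕ) : Fin n) := by push_cast; ring
    refine ⟨?_, ?_⟩
    · rw [e1]
      exact hne (u + 1) 2 (by omega) (by omega)
    · rw [e1, C.adj_comm]
      exact noadj (u + 1) 2 (by omega) (by omega)
  have common : ∀ u v : Fin n, C.Adj u v → ∃ w, (Cᶜ).Adj u w ∧ (Cᶜ).Adj w v := by
    intro u v h
    rw [adj_iff] at h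
    rcases h with h | h
    · -- u = v + 1
      obtain ⟨w, hw1, hw2⟩ := helper v
      have : u = v + 1 := by linear_combination h
      exact ⟨w, by rwa [this, (Cᶜ).adj_comm], by rwa [(Cᶜ).adj_comm]⟩
    · obtain ⟨w, hw1, hw2⟩ := helper u
      have : v = u + 1 := by linear_combination h
      exact ⟨w, hw1, by rwa [this]⟩
  have dist2 : ∀ u v : Fin n, C.Adj u v → (Cᶜ).dist u v = 2 := by
    intro u v h
    obtain ⟨w, hw1, hw2⟩ := common u v h
    have hle : (Cᶜ).dist u v ≤ 2 := by
      have := SimpleGraph.dist_le (SimpleGraph.Walk.cons hw1 hw2.toWalk)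
      simpa using this
    have hne0 : (Cᶜ).dist u v ≠ 0 := by
      rw [SimpleGraph.dist_ne_zero_iff_ne_and_reachable]
      exact ⟨h.ne, ⟨SimpleGraph.Walk.cons hw1 hw2.toWalk⟩⟩
    have hne1 : (Cᶜ).dist u v ≠ 1 := by
      intro h1
      rw [SimpleGraph.dist_eq_one_iff_adj, SimpleGraph.compl_adj] at h1
      exact h1.2 h
    omega
  have meta_eq : (Cᶜ).metamour = C := by
    ext u v
    show (Cᶜ).dist u v = 2 ↔ C.Adj u v
    constructor
    · intro h
      have hne0 : (Cᶜ).dist u v ≠ 0 := by omega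
      rw [SimpleGraph.dist_ne_zero_iff_ne_and_reachable] at hne0
      have hnadj : ¬ (Cᶜ).Adj u v := by
        rw [← SimpleGraph.dist_eq_one_iff_adj]
        omega
      rw [SimpleGraph.compl_adj] at hnadj
      push_neg at hnadj
      exact hnadj hne0.1
    · exact dist2 u v
  refine ⟨?_, ?_, meta_eq⟩
  · haveI : Nonempty (Fin n) := ⟨⟨0, by omega⟩⟩
    refine ⟨?_⟩
    intro u v
    by_cases huv : u = v
    · subst huv; exact SimpleGraph.Reachable.refl u
    by_cases hadj : C.Adj u v
    · obtain ⟨w, hw1, hw2⟩ := common u v hadj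
      exact ⟨SimpleGraph.Walk.cons hw1 hw2.toWalk⟩
    · exact ⟨(SimpleGraph.Walk.cons (by rw [SimpleGraph.compl_adj]; exact ⟨huv, hadj⟩) SimpleGraph.Walk.nil)⟩
  · intro v
    unfold SimpleGraph.metamourDegree
    have hset : {u | (Cᶜ).metamour.Adj v u} = {v - 1, v + 1} := by
      rw [meta_eq]
      ext w
      simp only [Set.mem_setOf_eq, Set.mem_insert_iff, Set.mem_singleton_iff, adj_iff]
      constructor
      · rintro (h | h)
        · exact Or.inl (by linear_combination -h)
        · exact Or.inr (by linear_combination h)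
      · rintro (h | h)
        · exact Or.inl (by rw [h]; ring)
        · exact Or.inr (by rw [h]; ring)
    rw [hset]
    refine Set.ncard_pair ?_
    intro h
    have : ((2 : ℕ) : Fin n) = 0 := by push_cast; linear_combination -h
    exact hz 2 (by omega) (by omega) this
end
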